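/- Let P_n(t) = ∏_{j=0}^{n-1}(t - x_j) and suppose w : ℝ → (0,∞) is differentiable with P_n · w satisfying the Bernstein-type bound |(P_n w)'(t)| ≤ (Cn/a_n) · sup_s |P_n(s)w(s)| for all t ∈ ℝ, with sup_s |P_n(s)w(s)| attained and finite and P_n(x_n)w(x_n) ≠ 0. Then for each 0 ≤ j < n, C|x_n - x_j| ≥ a_n/n. -/

import Mathlib

theorem stmt8 (n : ℕ) (hn : 1 ≤ n) (x : ℕ → ℝ) (w : ℝ → ℝ) (C a : ℝ)
    (hC : 0 < C) (ha : 0 < a) (hw : Differentiable ℝ w) (hwpos : ∀ t, 0 < w t)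
    (P : ℝ → ℝ) (hP : ∀ t, P t = ∏ j ∈ Finset.range n, (t - x j))
    (hsup : ∀ s, |P s * w s| ≤ |P (x n) * w (x n)|)
    (hne : P (x n) * w (x n) ≠ 0)
    (hB : ∀ t, |deriv (fun s => P s * w s) t| ≤ C * n / a * |P (x n) * w (x n)|) :
    ∀ j < n, C * |x n - x j| ≥ a / n := by
  intro j hj
  have hPfun : P = fun t => ∏ j ∈ Finset.range n, (t - x j) := funext hP
  have hPdiff : Differentiable ℝ P := by
    rw [hPfun]
    exact Differentiable.fun_finsetProd fun i _ => (differentiable_id.sub_const (x i))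
  have hfdiff : Differentiable ℝ (fun s => P s * w s) := hPdiff.mul hw
  set M := |P (x n) * w (x n)| with hM
  have hMpos : 0 < M := abs_pos.mpr hne
  have hPj : P (x j) = 0 := by
    rw [hP]
    exact Finset.prod_eq_zero (Finset.mem_range.mpr hj) (by ring)
  have hmvt : ‖(fun s => P s * w s) (x n) - (fun s => P s * w s) (x j)‖ ≤
      (C * n / a * M) * ‖x n - x j‖ := by
    apply Convex.norm_image_sub_le_of_norm_deriv_le
      (fun t _ => (hfdiff t).hasDerivAt.differentiableAt)
      (fun t _ => by simpa [Real.norm_eq_abs] using hB t)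
      convex_univ (Set.mem_univ _) (Set.mem_univ _)
  simp only [hPj, zero_mul, sub_zero, Real.norm_eq_abs] at hmvt
  have key : M ≤ (C * n / a * M) * |x n - x j| := hmvt
  have hn' : (0:ℝ) < n := by exact_mod_cast hn
  have h2 : (1:ℝ) ≤ C * n / a * |x n - x j| := by nlinarith [key, hMpos]
  rw [div_mul_eq_mul_div, le_div_iff₀ ha, one_mul] at h2
  rw [ge_iff_le, div_le_iff₀ hn']
  nlinarith [h2]
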